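/- Let Λ₈ ⊂ ℂ² be the additive subgroup generated over ℤ by (1,1), (1,−1), (i−1,0), (0,i−1). The linear map a(z₁,z₂) = (i z₁, −i z₂) and the affine map b′(z₁,z₂) = (z₂ + 1, −z₁) map Λ₈-congruence classes to Λ₈-congruence classes and hence induce bijections ā, b̄′ of the quotient group ℂ²/Λ₈. The subgroup of the permutation group of ℂ²/Λ₈ generated by ā and b̄′ is isomorphic to the quaternion group of order 8 (the dicyclic group QuaternionGroup 2). -/

import Mathlib

/-- The lattice `Λ₈ ⊂ ℂ²` generated over `ℤ` by `(1,1)`, `(1,-1)`, `(i-1,0)`, `(0,i-1)`. -/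
noncomputable def Lambda8 : AddSubgroup (ℂ × ℂ) :=
  AddSubgroup.closure
    {(1, 1), (1, -1), (Complex.I - 1, 0), (0, Complex.I - 1)}

/-- The linear map `a(z₁,z₂) = (i z₁, -i z₂)`. -/
noncomputable def amap : ℂ × ℂ → ℂ × ℂ := fun z => (Complex.I * z.1, -Complex.I * z.2)

/-- The affine map `b′(z₁,z₂) = (z₂ + 1, -z₁)`. -/
noncomputable def bmap : ℂ × ℂ → ℂ × ℂ := fun z => (z.2 + 1, -z.1)

open Complex in
lemma mem_Lambda8_iff (z : ℂ × ℂ) :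
    z ∈ Lambda8 ↔ ∃ a b c d : ℤ,
      z = ((a : ℂ) + b + c * (I - 1), (a : ℂ) - b + d * (I - 1)) := by
  constructor
  · intro hz
    induction hz using AddSubgroup.closure_induction with
    | mem x hx =>
      rcases hx with h | h | h | h
      · exact ⟨1, 0, 0, 0, by rw [h]; norm_num⟩
      · exact ⟨0, 1, 0, 0, by rw [h]; norm_num⟩
      · exact ⟨0, 0, 1, 0, by rw [h]; norm_num⟩
      · exact ⟨0, 0, 0, 1, by rw [h]; norm_num⟩
    | zero => exact ⟨0, 0, 0, 0, by norm_num; rfl⟩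
    | add x y hx hy ihx ihy =>
      obtain ⟨a, b, c, d, rfl⟩ := ihx
      obtain ⟨a', b', c', d', rfl⟩ := ihy
      exact ⟨a + a', b + b', c + c', d + d', by
        simp [Prod.ext_iff]; push_cast; constructor <;> ring⟩
    | neg x hx ihx =>
      obtain ⟨a, b, c, d, rfl⟩ := ihx
      exact ⟨-a, -b, -c, -d, by
        simp [Prod.ext_iff]; push_cast; constructor <;> ring⟩
  · rintro ⟨a, b, c, d, rfl⟩
    have h1 : ((1 : ℂ), (1 : ℂ)) ∈ Lambda8 := AddSubgroup.subset_closure (by simp)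
    have h2 : ((1 : ℂ), (-1 : ℂ)) ∈ Lambda8 := AddSubgroup.subset_closure (by simp)
    have h3 : ((I - 1 : ℂ), (0 : ℂ)) ∈ Lambda8 := AddSubgroup.subset_closure (by simp)
    have h4 : ((0 : ℂ), (I - 1 : ℂ)) ∈ Lambda8 := AddSubgroup.subset_closure (by simp)
    have := AddSubgroup.add_mem _ (AddSubgroup.add_mem _ (AddSubgroup.add_mem _
      (AddSubgroup.zsmul_mem _ h1 a) (AddSubgroup.zsmul_mem _ h2 b))
      (AddSubgroup.zsmul_mem _ h3 c)) (AddSubgroup.zsmul_mem _ h4 d)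
    convert this using 1
    simp [Prod.ext_iff, Prod.smul_def, zsmul_eq_mul]
    constructor <;> ring

/-- The inverse of `amap`. -/
noncomputable def ainv : ℂ × ℂ → ℂ × ℂ := fun z => (-Complex.I * z.1, Complex.I * z.2)

/-- The inverse of `bmap`. -/
noncomputable def binv : ℂ × ℂ → ℂ × ℂ := fun z => (-z.2, z.1 - 1)

open Complex in
lemma amap_mem {v : ℂ × ℂ} (hv : v ∈ Lambda8) : amap v ∈ Lambda8 := by
  rw [mem_Lambda8_iff] at hv ⊢
  obtain ⟨a, b, c, d, rfl⟩ := hv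
  refine ⟨b - c + d, a - c - d, a + b - c, -a + b + d, ?_⟩
  simp only [amap, Prod.ext_iff]
  push_cast
  constructor
  · linear_combination (c : ℂ) * Complex.I_sq
  · linear_combination (-(d : ℂ)) * Complex.I_sq

open Complex in
lemma ainv_mem {v : ℂ × ℂ} (hv : v ∈ Lambda8) : ainv v ∈ Lambda8 := by
  rw [mem_Lambda8_iff] at hv ⊢
  obtain ⟨a, b, c, d, rfl⟩ := hv
  refine ⟨c - b - d, c - a + d, c - a - b, a - b - d, ?_⟩
  simp only [ainv, Prod.ext_iff]
  push_cast
  constructor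
  · linear_combination (-(c : ℂ)) * Complex.I_sq
  · linear_combination (d : ℂ) * Complex.I_sq

open Complex in
lemma bL_mem {v : ℂ × ℂ} (hv : v ∈ Lambda8) : ((v.2, -v.1) : ℂ × ℂ) ∈ Lambda8 := by
  rw [mem_Lambda8_iff] at hv ⊢
  obtain ⟨a, b, c, d, rfl⟩ := hv
  exact ⟨-b, a, d, -c, by simp [Prod.ext_iff]; constructor <;> (push_cast; ring)⟩

open Complex in
lemma bLinv_mem {v : ℂ × ℂ} (hv : v ∈ Lambda8) : ((-v.2, v.1) : ℂ × ℂ) ∈ Lambda8 := by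
  rw [mem_Lambda8_iff] at hv ⊢
  obtain ⟨a, b, c, d, rfl⟩ := hv
  exact ⟨b, -a, -d, c, by simp [Prod.ext_iff]; constructor <;> (push_cast; ring)⟩

/-- Descend a bijection of `ℂ²` compatible with `Λ₈` to a permutation of the quotient. -/
noncomputable def latPerm (f g : ℂ × ℂ → ℂ × ℂ)
    (hf : ∀ z w : ℂ × ℂ, z - w ∈ Lambda8 → f z - f w ∈ Lambda8)
    (hg : ∀ z w : ℂ × ℂ, z - w ∈ Lambda8 → g z - g w ∈ Lambda8)
    (hgf : ∀ z, g (f z) = z) (hfg : ∀ z, f (g z) = z) :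
    Equiv.Perm ((ℂ × ℂ) ⧸ Lambda8) where
  toFun := Quotient.map' f (fun z w h => by
    rw [QuotientAddGroup.leftRel_apply] at h ⊢
    rw [neg_add_eq_sub] at h ⊢
    exact hf w z h)
  invFun := Quotient.map' g (fun z w h => by
    rw [QuotientAddGroup.leftRel_apply] at h ⊢
    rw [neg_add_eq_sub] at h ⊢
    exact hg w z h)
  left_inv := by
    intro q
    induction q using QuotientAddGroup.induction_on with
    | H z => simp [Quotient.map'_mk'', hgf]
  right_inv := by
    intro q
    induction q using QuotientAddGroup.induction_on with
    | H z => simp [Quotient.map'_mk'', hfg]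

lemma latPerm_mk (f g : ℂ × ℂ → ℂ × ℂ) (hf hg hgf hfg) (z : ℂ × ℂ) :
    latPerm f g hf hg hgf hfg (QuotientAddGroup.mk z) = QuotientAddGroup.mk (f z) := rfl

lemma quat_iso {G : Type*} [Group G] (A B : G) (hA4 : A ^ 4 = 1) (hB2 : B ^ 2 = A ^ 2)
    (hBA : B * A = A ^ 3 * B) (hA2 : A ^ 2 ≠ 1) :
    Nonempty ((Subgroup.closure {A, B} : Subgroup G) ≃* QuaternionGroup 2) := by
  have hv0 : ((0 : ZMod 4)).val = 0 := rfl
  have hv1 : ((1 : ZMod 4)).val = 1 := rfl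
  have hv2 : ((2 : ZMod 4)).val = 2 := rfl
  have hmod : ∀ m : ℕ, A ^ m = A ^ (m % 4) := by
    intro m
    conv_lhs => rw [← Nat.div_add_mod m 4]
    rw [pow_add, pow_mul, hA4, one_pow, one_mul]
  have hf_add : ∀ i j : ZMod 4, A ^ (i + j).val = A ^ i.val * A ^ j.val := by
    intro i j
    rw [← pow_add, ZMod.val_add, ← hmod]
  have hf_neg : ∀ i : ZMod 4, A ^ (-i).val = (A ^ i.val)⁻¹ := by
    intro i
    have : A ^ (-i).val * A ^ i.val = 1 := by
      rw [← hf_add, neg_add_cancel, hv0, pow_zero]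
    exact eq_inv_of_mul_eq_one_left this
  have hA3 : A ^ 3 = A⁻¹ := eq_inv_of_mul_eq_one_left (by rw [← pow_succ]; exact hA4)
  have hBA' : B * A = A⁻¹ * B := by rw [hBA, hA3]
  have hAB : A * B = B * A⁻¹ := by
    calc A * B = A * (B * A) * A⁻¹ := by group
    _ = A * (A⁻¹ * B) * A⁻¹ := by rw [hBA']
    _ = B * A⁻¹ := by group
  have hpow : ∀ k : ℕ, A ^ k * B = B * (A ^ k)⁻¹ := by
    intro k
    induction k with
    | zero => simp
    | succ k ih =>
      calc A ^ (k + 1) * B = A ^ k * (A * B) := by rw [pow_succ]; group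
      _ = A ^ k * B * A⁻¹ := by rw [hAB]; group
      _ = B * (A ^ k)⁻¹ * A⁻¹ := by rw [ih]
      _ = B * (A * A ^ k)⁻¹ := by rw [mul_inv_rev]; group
      _ = B * (A ^ (k + 1))⁻¹ := by rw [← pow_succ']
  have hfB : ∀ i : ZMod 4, A ^ i.val * B = B * A ^ (-i).val := by
    intro i; rw [hpow, hf_neg]
  let φfun : QuaternionGroup 2 → G := fun g =>
    match g with
    | QuaternionGroup.a i => A ^ i.val
    | QuaternionGroup.xa i => B * A ^ i.val
  have hmul : ∀ g h : QuaternionGroup 2, φfun (g * h) = φfun g * φfun h := by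
    rintro (i | i) (j | j)
    · show A ^ (i + j).val = A ^ i.val * A ^ j.val
      exact hf_add i j
    · show B * A ^ (j - i).val = A ^ i.val * (B * A ^ j.val)
      rw [← mul_assoc, hfB, mul_assoc, ← hf_add]
      have : -i + j = j - i := by ring
      rw [this]
    · show B * A ^ (i + j).val = B * A ^ i.val * A ^ j.val
      rw [mul_assoc, ← hf_add]
    · show A ^ (((2 : ℕ) : ZMod (2 * 2)) + j - i).val = (B * A ^ i.val) * (B * A ^ j.val)
      symm
      calc (B * A ^ i.val) * (B * A ^ j.val) = B * (A ^ i.val * B) * A ^ j.val := by group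
      _ = B * (B * A ^ (-i).val) * A ^ j.val := by rw [hfB]
      _ = (B * B) * (A ^ (-i).val * A ^ j.val) := by group
      _ = A ^ 2 * A ^ (-i + j).val := by rw [← pow_two, hB2, ← hf_add]
      _ = A ^ ((2 : ZMod 4)).val * A ^ (-i + j).val := by rw [hv2]
      _ = A ^ ((2 : ZMod 4) + (-i + j)).val := (hf_add _ _).symm
      _ = A ^ (((2 : ℕ) : ZMod (2 * 2)) + j - i).val := by congr 1; push_cast; ring
  let φ : QuaternionGroup 2 →* G := MonoidHom.mk' φfun hmul
  have hφa : ∀ i, φ (QuaternionGroup.a i) = A ^ i.val := fun _ => rfl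
  have hφxa : ∀ i, φ (QuaternionGroup.xa i) = B * A ^ i.val := fun _ => rfl
  have hφA : φ (QuaternionGroup.a 1) = A := by rw [hφa, hv1, pow_one]
  have hφB : φ (QuaternionGroup.xa 0) = B := by rw [hφxa, hv0, pow_zero, mul_one]
  have hrange : φ.range = Subgroup.closure {A, B} := by
    apply le_antisymm
    · rintro g ⟨x, rfl⟩
      have hAmem : A ∈ Subgroup.closure {A, B} :=
        Subgroup.subset_closure (by simp)
      have hBmem : B ∈ Subgroup.closure {A, B} :=
        Subgroup.subset_closure (by simp)
      rcases x with i | i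
      · exact pow_mem hAmem _
      · exact mul_mem hBmem (pow_mem hAmem _)
    · rw [Subgroup.closure_le]
      rintro x (rfl | rfl)
      · exact ⟨QuaternionGroup.a 1, hφA⟩
      · exact ⟨QuaternionGroup.xa 0, hφB⟩
  have hdec : ∀ g : QuaternionGroup 2, g ≠ 1 →
      g = QuaternionGroup.a 2 ∨ g * g = QuaternionGroup.a 2 := by decide
  have hφa2 : φ (QuaternionGroup.a 2) = A ^ 2 := by rw [hφa, hv2]
  have hinj : Function.Injective φ := by
    rw [← MonoidHom.ker_eq_bot_iff, eq_bot_iff]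
    intro g hg
    rw [MonoidHom.mem_ker] at hg
    rw [Subgroup.mem_bot]
    by_contra hne
    rcases hdec g hne with h | h
    · exact hA2 (by rw [← hφa2, ← h]; exact hg)
    · exact hA2 (by rw [← hφa2, ← h, map_mul, hg, one_mul])
  exact ⟨(MulEquiv.subgroupCongr hrange).symm.trans (MonoidHom.ofInjective hinj).symm⟩

open Complex in
lemma one_zero_not_mem : (((1 : ℂ), (0 : ℂ)) : ℂ × ℂ) ∉ Lambda8 := by
  rw [mem_Lambda8_iff]
  rintro ⟨a, b, c, d, h⟩
  rw [Prod.ext_iff] at h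
  obtain ⟨h1, h2⟩ := h
  rw [Complex.ext_iff] at h1 h2
  simp [Complex.add_re, Complex.add_im, Complex.mul_re, Complex.mul_im] at h1 h2
  obtain ⟨h1r, h1i⟩ := h1
  obtain ⟨h2r, h2i⟩ := h2
  have hc : (c : ℝ) = 0 := by linarith
  have hd : (d : ℝ) = 0 := by linarith
  have hc' : c = 0 := by exact_mod_cast hc
  have hd' : d = 0 := by exact_mod_cast hd
  subst hc' hd'
  have ha : (1 : ℝ) = a + b := by push_cast at h1r; linarith
  have hb : (0 : ℝ) = a - b := by push_cast at h2r; linarith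
  have ha' : a + b = 1 := by exact_mod_cast ha.symm
  have hb' : a - b = 0 := by exact_mod_cast hb.symm
  omega

open Complex in
/-- `a` and `b′` induce bijections `ā`, `b̄′` of `ℂ²/Λ₈`, and the subgroup of the
permutation group of `ℂ²/Λ₈` generated by `ā` and `b̄′` is isomorphic to the quaternion
group of order 8. -/
theorem stmt_13 :
    (∃ A B : Equiv.Perm ((ℂ × ℂ) ⧸ Lambda8),
      (∀ z : ℂ × ℂ, A (QuotientAddGroup.mk z) = QuotientAddGroup.mk (amap z)) ∧
      (∀ z : ℂ × ℂ, B (QuotientAddGroup.mk z) = QuotientAddGroup.mk (bmap z))) ∧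
    ∀ A B : Equiv.Perm ((ℂ × ℂ) ⧸ Lambda8),
      (∀ z : ℂ × ℂ, A (QuotientAddGroup.mk z) = QuotientAddGroup.mk (amap z)) →
      (∀ z : ℂ × ℂ, B (QuotientAddGroup.mk z) = QuotientAddGroup.mk (bmap z)) →
      Nonempty ((Subgroup.closure {A, B} : Subgroup (Equiv.Perm ((ℂ × ℂ) ⧸ Lambda8)))
        ≃* QuaternionGroup 2) := by
  constructor
  · -- existence of the induced permutations
    have hfa : ∀ z w : ℂ × ℂ, z - w ∈ Lambda8 → amap z - amap w ∈ Lambda8 := by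
      intro z w h
      have : amap z - amap w = amap (z - w) := by
        simp [amap, Prod.ext_iff]; constructor <;> ring
      rw [this]; exact amap_mem h
    have hga : ∀ z w : ℂ × ℂ, z - w ∈ Lambda8 → ainv z - ainv w ∈ Lambda8 := by
      intro z w h
      have : ainv z - ainv w = ainv (z - w) := by
        simp [ainv, Prod.ext_iff]; constructor <;> ring
      rw [this]; exact ainv_mem h
    have hfb : ∀ z w : ℂ × ℂ, z - w ∈ Lambda8 → bmap z - bmap w ∈ Lambda8 := by
      intro z w h
      have : bmap z - bmap w = ((z - w).2, -(z - w).1) := by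
        simp [bmap, Prod.ext_iff]; ring
      rw [this]; exact bL_mem h
    have hgb : ∀ z w : ℂ × ℂ, z - w ∈ Lambda8 → binv z - binv w ∈ Lambda8 := by
      intro z w h
      have : binv z - binv w = (-(z - w).2, (z - w).1) := by
        simp [binv, Prod.ext_iff]; ring
      rw [this]; exact bLinv_mem h
    have hgfa : ∀ z : ℂ × ℂ, ainv (amap z) = z := by
      intro z
      have e1 : (ainv (amap z)).1 = z.1 := by
        show -I * (I * z.1) = z.1
        linear_combination (-z.1) * Complex.I_sq
      have e2 : (ainv (amap z)).2 = z.2 := by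
        show I * (-I * z.2) = z.2
        linear_combination (-z.2) * Complex.I_sq
      exact Prod.ext e1 e2
    have hfga : ∀ z : ℂ × ℂ, amap (ainv z) = z := by
      intro z
      have e1 : (amap (ainv z)).1 = z.1 := by
        show I * (-I * z.1) = z.1
        linear_combination (-z.1) * Complex.I_sq
      have e2 : (amap (ainv z)).2 = z.2 := by
        show -I * (I * z.2) = z.2
        linear_combination (-z.2) * Complex.I_sq
      exact Prod.ext e1 e2
    have hgfb : ∀ z : ℂ × ℂ, binv (bmap z) = z := by
      intro z
      simp [bmap, binv, Prod.ext_iff]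
    have hfgb : ∀ z : ℂ × ℂ, bmap (binv z) = z := by
      intro z
      simp [bmap, binv, Prod.ext_iff]
    exact ⟨latPerm amap ainv hfa hga hgfa hfga, latPerm bmap binv hfb hgb hgfb hfgb,
      fun z => rfl, fun z => rfl⟩
  · -- the isomorphism with the quaternion group
    intro A B hA hB
    have key : ∀ (z w u : ℂ × ℂ), u ∈ Lambda8 → -z + w = u →
        (QuotientAddGroup.mk z : (ℂ × ℂ) ⧸ Lambda8) = QuotientAddGroup.mk w := by
      intro z w u hu he
      rw [QuotientAddGroup.eq, he]
      exact hu
    have hA4 : A ^ 4 = 1 := by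
      ext q
      induction q using QuotientAddGroup.induction_on with
      | H z =>
        show A (A (A (A (QuotientAddGroup.mk z)))) = QuotientAddGroup.mk z
        rw [hA, hA, hA, hA]
        have e1 : (amap (amap (amap (amap z)))).1 = z.1 := by
          show I * (I * (I * (I * z.1))) = z.1
          linear_combination z.1 * (I ^ 2 - 1) * Complex.I_sq
        have e2 : (amap (amap (amap (amap z)))).2 = z.2 := by
          show -I * (-I * (-I * (-I * z.2))) = z.2
          linear_combination z.2 * (I ^ 2 - 1) * Complex.I_sq
        rw [Prod.ext e1 e2]
    have hB2 : B ^ 2 = A ^ 2 := by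
      ext q
      induction q using QuotientAddGroup.induction_on with
      | H z =>
        show B (B (QuotientAddGroup.mk z)) = A (A (QuotientAddGroup.mk z))
        rw [hA, hA, hB, hB]
        refine key _ _ ((-1 : ℂ), (1 : ℂ)) ?_ ?_
        · exact (mem_Lambda8_iff _).mpr ⟨0, -1, 0, 0, by norm_num [Prod.ext_iff]⟩
        · have e1 : (-(bmap (bmap z)) + amap (amap z)).1 = ((-1 : ℂ), (1 : ℂ)).1 := by
            show -(-z.1 + 1) + I * (I * z.1) = -1
            linear_combination z.1 * Complex.I_sq
          have e2 : (-(bmap (bmap z)) + amap (amap z)).2 = ((-1 : ℂ), (1 : ℂ)).2 := by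
            show -(-(z.2 + 1)) + -I * (-I * z.2) = 1
            linear_combination z.2 * Complex.I_sq
          exact Prod.ext e1 e2
    have hBA : B * A = A ^ 3 * B := by
      ext q
      induction q using QuotientAddGroup.induction_on with
      | H z =>
        show B (A (QuotientAddGroup.mk z)) = A (A (A (B (QuotientAddGroup.mk z))))
        rw [hA, hB, hB, hA, hA, hA]
        refine key _ _ ((-1 - I : ℂ), (0 : ℂ)) ?_ ?_
        · refine (mem_Lambda8_iff _).mpr ⟨-1, -1, -1, 0, ?_⟩
          rw [Prod.ext_iff]
          constructor <;> (push_cast; ring_nf) <;> simp [Complex.ext_iff]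
        · have e1 : (-(bmap (amap z)) + amap (amap (amap (bmap z)))).1
              = ((-1 - I : ℂ), (0 : ℂ)).1 := by
            show -(-I * z.2 + 1) + I * (I * (I * (z.2 + 1))) = -1 - I
            linear_combination (I * (z.2 + 1)) * Complex.I_sq
          have e2 : (-(bmap (amap z)) + amap (amap (amap (bmap z)))).2
              = ((-1 - I : ℂ), (0 : ℂ)).2 := by
            show -(-(I * z.1)) + -I * (-I * (-I * -z.1)) = 0
            linear_combination (I * z.1) * Complex.I_sq
          exact Prod.ext e1 e2
    have hA2 : A ^ 2 ≠ 1 := by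
      intro h
      have h2 : A (A (QuotientAddGroup.mk ((1 / 2 : ℂ), (0 : ℂ)))) =
          QuotientAddGroup.mk (((1 / 2 : ℂ), (0 : ℂ)) : ℂ × ℂ) := by
        have := congrFun (congrArg (fun (e : Equiv.Perm ((ℂ × ℂ) ⧸ Lambda8)) =>
          (e : ((ℂ × ℂ) ⧸ Lambda8) → ((ℂ × ℂ) ⧸ Lambda8))) h)
          (QuotientAddGroup.mk ((1 / 2 : ℂ), (0 : ℂ)))
        simpa [pow_succ, Equiv.Perm.mul_apply] using this
      rw [hA, hA, QuotientAddGroup.eq] at h2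
      apply one_zero_not_mem
      have e1 : (-(amap (amap ((1 / 2 : ℂ), (0 : ℂ)))) + ((1 / 2 : ℂ), (0 : ℂ))).1
          = (((1 : ℂ), (0 : ℂ)) : ℂ × ℂ).1 := by
        show -(I * (I * (1 / 2))) + 1 / 2 = 1
        linear_combination (-(1 : ℂ) / 2) * Complex.I_sq
      have e2 : (-(amap (amap ((1 / 2 : ℂ), (0 : ℂ)))) + ((1 / 2 : ℂ), (0 : ℂ))).2
          = (((1 : ℂ), (0 : ℂ)) : ℂ × ℂ).2 := by
        show -(-I * (-I * 0)) + 0 = 0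
        ring
      rw [Prod.ext e1 e2] at h2
      exact h2
    exact quat_iso A B hA4 hB2 hBA hA2
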